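/- Let $\mu = \mathcal{N}(m,\Gamma)$ on $\mathbb{R}^d$ and $K,Q,V \in \mathbb{R}^{d\times d}$. Then the pushforward of $\mu$ through the map $z \mapsto T^{K,Q,V}[\mu](z)$ is the Gaussian measure $\mathcal{N}\big(V(\mathrm{I}_d + \Gamma K^\top Q) m,\ (V\Gamma K^\top Q)\,\Gamma\,(V\Gamma K^\top Q)^\top\big)$. -/

import Mathlib

open MeasureTheory ProbabilityTheory Matrix Real
open scoped ENNReal NNReal BigOperators

section Scalar

lemma pdf_mul_exp (b t : ℝ) :
    gaussianPDFReal 0 1 t * Real.exp (b * t)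
      = Real.exp (b ^ 2 / 2) * gaussianPDFReal 0 1 (t - b) := by
  simp only [gaussianPDFReal, NNReal.coe_one, mul_one, sub_zero]
  rw [mul_assoc, ← Real.exp_add, mul_comm (Real.exp (b ^ 2 / 2)), mul_assoc, ← Real.exp_add]
  congr 1
  ring

lemma integrable_pdf_mul_id : Integrable (fun t : ℝ => gaussianPDFReal 0 1 t * t) := by
  have h : (fun t : ℝ => gaussianPDFReal 0 1 t * t)
      = fun t => (√(2 * π))⁻¹ * (t * Real.exp (-(1/2) * t ^ 2)) := by
    ext t
    simp only [gaussianPDFReal, NNReal.coe_one, mul_one, sub_zero]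
    ring_nf
  rw [h]
  exact (integrable_mul_exp_neg_mul_sq (by norm_num)).const_mul _

lemma integral_pdf_mul_id : (∫ t : ℝ, gaussianPDFReal 0 1 t * t) = 0 := by
  have h := MeasureTheory.integral_neg_eq_self (fun t : ℝ => gaussianPDFReal 0 1 t * t) volume
  have heq : ∀ t : ℝ, gaussianPDFReal 0 1 (-t) * (-t) = -(gaussianPDFReal 0 1 t * t) := by
    intro t
    simp [gaussianPDFReal]
  simp only [heq, integral_neg] at h
  linarith

lemma integral_gaussianReal_eq (g : ℝ → ℝ) :
    (∫ t, g t ∂(gaussianReal 0 1)) = ∫ t, gaussianPDFReal 0 1 t * g t := by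
  rw [gaussianReal_of_var_ne_zero 0 one_ne_zero, gaussianPDF_def]
  have : (fun x => ENNReal.ofReal (gaussianPDFReal 0 1 x))
      = fun x => ((gaussianPDFReal 0 1 x).toNNReal : ℝ≥0∞) := rfl
  rw [this, integral_withDensity_eq_integral_smul
    ((measurable_gaussianPDFReal 0 1).real_toNNReal)]
  congr 1
  ext t
  simp [NNReal.smul_def, Real.coe_toNNReal _ (gaussianPDFReal_nonneg 0 1 t)]

lemma integrable_gaussian_exp (b : ℝ) :
    Integrable (fun t => Real.exp (b * t)) (gaussianReal 0 1) := by
  rw [gaussianReal_of_var_ne_zero 0 one_ne_zero, gaussianPDF_def,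
    integrable_withDensity_iff (measurable_gaussianPDFReal 0 1).ennreal_ofReal
      (Filter.Eventually.of_forall fun x => ENNReal.ofReal_lt_top)]
  have h : (fun t : ℝ => Real.exp (b * t) * (ENNReal.ofReal (gaussianPDFReal 0 1 t)).toReal)
      = fun t => Real.exp (b ^ 2 / 2) * gaussianPDFReal 0 1 (t - b) := by
    ext t
    rw [ENNReal.toReal_ofReal (gaussianPDFReal_nonneg 0 1 t), mul_comm, pdf_mul_exp]
  rw [h]
  exact ((integrable_gaussianPDFReal 0 1).comp_sub_right b).const_mul _

lemma integrable_gaussian_exp_mul (b : ℝ) :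
    Integrable (fun t => Real.exp (b * t) * t) (gaussianReal 0 1) := by
  rw [gaussianReal_of_var_ne_zero 0 one_ne_zero, gaussianPDF_def,
    integrable_withDensity_iff (measurable_gaussianPDFReal 0 1).ennreal_ofReal
      (Filter.Eventually.of_forall fun x => ENNReal.ofReal_lt_top)]
  have h : (fun t : ℝ => Real.exp (b * t) * t * (ENNReal.ofReal (gaussianPDFReal 0 1 t)).toReal)
      = fun t => Real.exp (b ^ 2 / 2) * ((gaussianPDFReal 0 1 (t - b) * (t - b))
          + b * gaussianPDFReal 0 1 (t - b)) := by
    ext t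
    rw [ENNReal.toReal_ofReal (gaussianPDFReal_nonneg 0 1 t)]
    linear_combination t * pdf_mul_exp b t
  rw [h]
  exact ((integrable_pdf_mul_id.comp_sub_right b).add
    (((integrable_gaussianPDFReal 0 1).comp_sub_right b).const_mul b)).const_mul _

lemma integral_gaussian_exp (b : ℝ) :
    (∫ t, Real.exp (b * t) ∂(gaussianReal 0 1)) = Real.exp (b ^ 2 / 2) := by
  rw [integral_gaussianReal_eq]
  simp_rw [pdf_mul_exp]
  rw [integral_const_mul, integral_sub_right_eq_self (gaussianPDFReal 0 1) b,
    integral_gaussianPDFReal_eq_one 0 one_ne_zero, mul_one]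

lemma integral_gaussian_exp_mul (b : ℝ) :
    (∫ t, Real.exp (b * t) * t ∂(gaussianReal 0 1)) = b * Real.exp (b ^ 2 / 2) := by
  rw [integral_gaussianReal_eq]
  have h : (fun t : ℝ => gaussianPDFReal 0 1 t * (Real.exp (b * t) * t))
      = fun t => Real.exp (b ^ 2 / 2) * ((gaussianPDFReal 0 1 (t - b) * (t - b))
          + b * gaussianPDFReal 0 1 (t - b)) := by
    ext t
    linear_combination t * pdf_mul_exp b t
  rw [h, integral_const_mul, integral_add (integrable_pdf_mul_id.comp_sub_right b)
    (((integrable_gaussianPDFReal 0 1).comp_sub_right b).const_mul b)]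
  rw [integral_sub_right_eq_self (fun s => gaussianPDFReal 0 1 s * s) b, integral_pdf_mul_id,
    integral_const_mul, integral_sub_right_eq_self (gaussianPDFReal 0 1) b,
    integral_gaussianPDFReal_eq_one 0 one_ne_zero]
  ring

end Scalar

/-- The standard Gaussian measure on `Fin d → ℝ`. -/
noncomputable def stdGaussian (d : ℕ) : Measure (Fin d → ℝ) :=
  Measure.pi fun _ => gaussianReal 0 1

section Multi

variable {d : ℕ}

instance : IsProbabilityMeasure (stdGaussian d) := by
  unfold _root_.stdGaussian; infer_instance

lemma stdGaussian_integral_prod (f : Fin d → ℝ → ℝ) :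
    (∫ x, ∏ i, f i (x i) ∂(stdGaussian d)) = ∏ i, ∫ t, f i t ∂(gaussianReal 0 1) := by
  letI : MeasureSpace ℝ := ⟨gaussianReal 0 1⟩
  haveI : SigmaFinite (volume : Measure ℝ) := inferInstanceAs (SigmaFinite (gaussianReal 0 1))
  exact MeasureTheory.integral_fintype_prod_eq_prod (μ := fun _ => gaussianReal 0 1) f

lemma stdGaussian_integrable_prod (f : Fin d → ℝ → ℝ)
    (hf : ∀ i, Integrable (f i) (gaussianReal 0 1)) :
    Integrable (fun x => ∏ i, f i (x i)) (stdGaussian d) := by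
  letI : MeasureSpace ℝ := ⟨gaussianReal 0 1⟩
  haveI : SigmaFinite (volume : Measure ℝ) := inferInstanceAs (SigmaFinite (gaussianReal 0 1))
  exact MeasureTheory.Integrable.fintype_prod hf

lemma exp_dot_eq_prod (u : Fin d → ℝ) (x : Fin d → ℝ) :
    Real.exp (u ⬝ᵥ x) = ∏ i, Real.exp (u i * x i) := by
  rw [← Real.exp_sum]; rfl

lemma integrable_exp_dot (u : Fin d → ℝ) :
    Integrable (fun x => Real.exp (u ⬝ᵥ x)) (stdGaussian d) := by
  simp_rw [exp_dot_eq_prod]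
  exact stdGaussian_integrable_prod _ fun i => integrable_gaussian_exp (u i)

lemma integrable_exp_dot_mul (u : Fin d → ℝ) (j : Fin d) :
    Integrable (fun x => Real.exp (u ⬝ᵥ x) * x j) (stdGaussian d) := by
  have h : (fun x : Fin d → ℝ => Real.exp (u ⬝ᵥ x) * x j)
      = fun x => ∏ i, (fun t => Real.exp (u i * t) * (if i = j then t else 1)) (x i) := by
    ext x
    rw [Finset.prod_mul_distrib, ← exp_dot_eq_prod, Finset.prod_ite_eq' Finset.univ j (fun i => x i)]
    simp
  rw [h]
  exact stdGaussian_integrable_prod (fun i t => Real.exp (u i * t) * (if i = j then t else 1))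
    (fun i => by
      by_cases hij : i = j
      · simpa [hij] using integrable_gaussian_exp_mul (u i)
      · simpa [hij] using integrable_gaussian_exp (u i))

lemma integral_exp_dot (u : Fin d → ℝ) :
    (∫ x, Real.exp (u ⬝ᵥ x) ∂(stdGaussian d)) = ∏ i, Real.exp (u i ^ 2 / 2) := by
  simp_rw [exp_dot_eq_prod]
  exact (stdGaussian_integral_prod (fun i t => Real.exp (u i * t))).trans
    (Finset.prod_congr rfl fun i _ => integral_gaussian_exp (u i))

lemma integral_exp_dot_mul (u : Fin d → ℝ) (j : Fin d) :
    (∫ x, Real.exp (u ⬝ᵥ x) * x j ∂(stdGaussian d))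
      = u j * ∏ i, Real.exp (u i ^ 2 / 2) := by
  have h : (fun x : Fin d → ℝ => Real.exp (u ⬝ᵥ x) * x j)
      = fun x => ∏ i, (fun t => Real.exp (u i * t) * (if i = j then t else 1)) (x i) := by
    ext x
    rw [Finset.prod_mul_distrib, ← exp_dot_eq_prod, Finset.prod_ite_eq' Finset.univ j (fun i => x i)]
    simp
  rw [h]
  refine ((stdGaussian_integral_prod
    (fun i t => Real.exp (u i * t) * (if i = j then t else 1))).trans ?_)
  have h2 : ∀ i : Fin d, (∫ t, Real.exp (u i * t) * (if i = j then t else 1) ∂(gaussianReal 0 1))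
      = Real.exp (u i ^ 2 / 2) * (if i = j then u i else 1) := by
    intro i
    by_cases hij : i = j
    · simp only [hij, if_true]
      rw [integral_gaussian_exp_mul]; ring
    · simp only [hij, if_false, mul_one]
      exact integral_gaussian_exp (u i)
  rw [Finset.prod_congr rfl fun i _ => h2 i, Finset.prod_mul_distrib,
    Finset.prod_ite_eq' Finset.univ j (fun i => u i)]
  simp [mul_comm]

end Multi

/-- The Gaussian measure `N(m, A * Aᵀ)` on `ℝ^d`, realized as the pushforward of the
standard Gaussian by the affine map `x ↦ m + A x`. -/
noncomputable def gaussianVec {d : ℕ} (m : Fin d → ℝ) (A : Matrix (Fin d) (Fin d) ℝ) :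
    Measure (Fin d → ℝ) :=
  (stdGaussian d).map (fun x => m + A.mulVec x)

/-- Softmax attention with prompt measure `μ`, query token `z`, and parameters `K, Q, V`. -/
noncomputable def attn {d : ℕ} (K Q V : Matrix (Fin d) (Fin d) ℝ)
    (μ : Measure (Fin d → ℝ)) (z : Fin d → ℝ) : Fin d → ℝ :=
  (∫ z', Real.exp ((Q.mulVec z) ⬝ᵥ (K.mulVec z')) ∂μ)⁻¹ •
    ∫ z', Real.exp ((Q.mulVec z) ⬝ᵥ (K.mulVec z')) • V.mulVec z' ∂μ

section Main

variable {d : ℕ}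

lemma continuous_mulVec (M : Matrix (Fin d) (Fin d) ℝ) :
    Continuous fun x : Fin d → ℝ => M.mulVec x := by
  have h := LinearMap.continuous_of_finiteDimensional (Matrix.mulVecLin M)
  exact h

lemma continuous_dot (c : Fin d → ℝ) : Continuous fun v : Fin d → ℝ => c ⬝ᵥ v := by
  exact continuous_finset_sum _ fun i _ => continuous_const.mul (continuous_apply i)

lemma mulVec_eq_sum_cols (B : Matrix (Fin d) (Fin d) ℝ) (v : Fin d → ℝ) :
    B.mulVec v = ∑ k, v k • (fun j => B j k) := by
  funext j
  simp [Matrix.mulVec, dotProduct, Finset.sum_apply, mul_comm]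

set_option maxHeartbeats 1000000 in
lemma attn_gaussianVec_eq (m : Fin d → ℝ) (A K Q V : Matrix (Fin d) (Fin d) ℝ) :
    attn K Q V (gaussianVec m A)
      = fun z => V.mulVec m + (V * (A * Aᵀ) * Kᵀ * Q).mulVec z := by
  funext z
  set c := Q.mulVec z with hc
  set u := (Aᵀ * Kᵀ).mulVec c with hu
  set a := c ⬝ᵥ K.mulVec m with ha
  have hf : Measurable fun x : Fin d → ℝ => m + A.mulVec x :=
    (continuous_const.add (continuous_mulVec A)).measurable
  have hdot : ∀ x, c ⬝ᵥ K.mulVec (m + A.mulVec x) = a + u ⬝ᵥ x := by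
    intro x
    have h2 : c ⬝ᵥ (K * A) *ᵥ x = u ⬝ᵥ x := by
      rw [dotProduct_mulVec, ← Matrix.mulVec_transpose, Matrix.transpose_mul]
    rw [mulVec_add, dotProduct_add, mulVec_mulVec, h2]
  have hcont : Continuous fun z' : Fin d → ℝ => Real.exp (c ⬝ᵥ K.mulVec z') :=
    Real.continuous_exp.comp ((continuous_dot c).comp (continuous_mulVec K))
  have hD : (∫ z', Real.exp (c ⬝ᵥ K.mulVec z') ∂(gaussianVec m A)) = Real.exp a * ∏ i, Real.exp (u i ^ 2 / 2) := by
    rw [gaussianVec, integral_map hf.aemeasurable hcont.aestronglyMeasurable]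
    simp_rw [hdot, Real.exp_add]
    rw [integral_const_mul, integral_exp_dot u]
  have hN : (∫ z', Real.exp (c ⬝ᵥ K.mulVec z') • V.mulVec z' ∂(gaussianVec m A))
      = (Real.exp a * ∏ i, Real.exp (u i ^ 2 / 2)) • (V.mulVec m + (V * A).mulVec u) := by
    rw [gaussianVec, integral_map hf.aemeasurable
      (show Continuous fun z' : Fin d → ℝ => Real.exp (c ⬝ᵥ K.mulVec z') • V.mulVec z' from
        hcont.smul (continuous_mulVec V)).aestronglyMeasurable]
    have hint : ∀ x : Fin d → ℝ, Real.exp (c ⬝ᵥ K.mulVec (m + A.mulVec x))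
        • V.mulVec (m + A.mulVec x)
        = Real.exp a • (Real.exp (u ⬝ᵥ x) • V.mulVec m
            + ∑ k, (Real.exp (u ⬝ᵥ x) * x k) • (fun j => (V * A) j k)) := by
      intro x
      rw [hdot, Real.exp_add, mul_smul, mulVec_add, mulVec_mulVec, smul_add,
        mulVec_eq_sum_cols (V * A) x, Finset.smul_sum]
      simp_rw [smul_smul]
    simp_rw [hint]
    rw [integral_smul]
    rw [integral_add ((integrable_exp_dot u).smul_const _)
      (integrable_finset_sum _ fun k _ => (integrable_exp_dot_mul u k).smul_const _)]
    rw [integral_finset_sum _ fun k _ => (integrable_exp_dot_mul u k).smul_const _]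
    simp_rw [integral_smul_const, integral_exp_dot u, integral_exp_dot_mul]
    rw [mulVec_eq_sum_cols (V * A) u, mul_smul]
    congr 1
    rw [smul_add, Finset.smul_sum]
    congr 1
    refine Finset.sum_congr rfl fun k _ => ?_
    rw [smul_smul, mul_comm]
  have hpos : Real.exp a * ∏ i, Real.exp (u i ^ 2 / 2) ≠ 0 := by
    have : 0 < ∏ i, Real.exp (u i ^ 2 / 2) := Finset.prod_pos fun i _ => Real.exp_pos _
    positivity
  show (∫ z', Real.exp (c ⬝ᵥ K.mulVec z') ∂(gaussianVec m A))⁻¹ •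
      (∫ z', Real.exp (c ⬝ᵥ K.mulVec z') • V.mulVec z' ∂(gaussianVec m A))
      = V.mulVec m + (V * (A * Aᵀ) * Kᵀ * Q).mulVec z
  rw [hD, hN, smul_smul, inv_mul_cancel₀ hpos, one_smul]
  congr 1
  rw [hu, hc, mulVec_mulVec, mulVec_mulVec]
  simp only [Matrix.mul_assoc]

/-- For `μ = N(m, Γ)` with `Γ = A Aᵀ`, the pushforward of `μ` through the attention map
`z ↦ T^{K,Q,V}[μ](z)` is the Gaussian measure
`N(V (I + Γ Kᵀ Q) m, (V Γ Kᵀ Q) Γ (V Γ Kᵀ Q)ᵀ)`; the covariance is realized via the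
factor `B = V Γ Kᵀ Q A`, which satisfies `B Bᵀ = (V Γ Kᵀ Q) Γ (V Γ Kᵀ Q)ᵀ`. -/
theorem pushforward_attention_gaussian {d : ℕ} (m : Fin d → ℝ)
    (A K Q V Γ : Matrix (Fin d) (Fin d) ℝ) (hΓ : Γ = A * Aᵀ) :
    (gaussianVec m A).map (attn K Q V (gaussianVec m A)) =
      gaussianVec ((V * (1 + Γ * Kᵀ * Q)).mulVec m) (V * Γ * Kᵀ * Q * A) := by
  subst hΓ
  rw [attn_gaussianVec_eq m A K Q V]
  rw [gaussianVec, gaussianVec,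
    Measure.map_map (show Measurable fun z => V.mulVec m + (V * (A * Aᵀ) * Kᵀ * Q).mulVec z from
        (continuous_const.add (continuous_mulVec _)).measurable)
      (show Measurable fun x => m + A.mulVec x from (continuous_const.add (continuous_mulVec A)).measurable)]
  congr 1
  funext x
  show V.mulVec m + (V * (A * Aᵀ) * Kᵀ * Q).mulVec (m + A.mulVec x)
      = (V * (1 + A * Aᵀ * Kᵀ * Q)).mulVec m + (V * (A * Aᵀ) * Kᵀ * Q * A).mulVec x
  rw [mulVec_add, mulVec_mulVec, Matrix.mul_add, Matrix.mul_one, add_mulVec, ← add_assoc]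
  congr 2
  simp only [Matrix.mul_assoc]

end Main
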